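/- Fix 1 ≤ i ≤ n−1 and β ∈ ℤ₊ⁿ. Then for every m ∈ ℤ (such that the shifted tuple has nonnegative entries where needed), Σ_{k=1}^{n} θ(ε_k, β)[β_k] = Σ_{k=1}^{n} θ(ε_k, β + m(ε_i − ε_{i+1})) [(β + m(ε_i − ε_{i+1}))_k], where [m] is the quantum integer and θ(ε_k,β) = q^{Σ_{s>k}β_s − Σ_{s<k}β_s}. -/

import Mathlib

open Finset

/-- The quantum integer `[m] := (q^m - q^{-m})/(q - q^{-1})` for `m : ℤ`. -/
def qint {K : Type*} [Field K] (q : K) (m : ℤ) : K :=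
  (q ^ m - q ^ (-m)) / (q - q⁻¹)

/-- `θ(ε_k, β) = q^{Σ_{s>k} β_s - Σ_{s<k} β_s}`. -/
def thq {K : Type*} [Field K] (q : K) (n : ℕ) (β : ℕ → ℤ) (k : ℕ) : K :=
  q ^ ((∑ s ∈ Finset.Icc (k + 1) n, β s) - ∑ s ∈ Finset.Ico 1 k, β s)

/-- The `i`-th standard basis vector `ε_i`. -/
def eps (i : ℕ) : ℕ → ℤ := fun k => if k = i then 1 else 0

/-- Lemma 2.1: `Σ_k θ(ε_k,β)[β_k]` is invariant under shifting `β` by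
integer multiples of `ε_i - ε_{i+1}`. -/
theorem sum_theta_qint_invariant {K : Type*} [Field K] (q : K)
    (hq0 : q ≠ 0) (hq1 : q ≠ 1) (hqm : q ≠ -1)
    (n i : ℕ) (hi1 : 1 ≤ i) (hi2 : i + 1 ≤ n)
    (β : ℕ → ℤ) (hβ : ∀ k ∈ Finset.Icc 1 n, 0 ≤ β k) (m : ℤ) :
    ∑ k ∈ Finset.Icc 1 n, thq q n β k * qint q (β k) =
    ∑ k ∈ Finset.Icc 1 n,
      thq q n (β + m • (eps i - eps (i + 1))) k *
        qint q ((β + m • (eps i - eps (i + 1))) k) := by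
  have hE : q - q⁻¹ ≠ 0 := by
    rw [sub_ne_zero]
    intro h
    have h1 : q * q = 1 := by
      nth_rewrite 2 [h]
      exact mul_inv_cancel₀ hq0
    rcases mul_self_eq_one_iff.mp h1 with h | h
    · exact hq1 h
    · exact hqm h
  set β' : ℕ → ℤ := β + m • (eps i - eps (i + 1)) with hβ'def
  have happ : ∀ k, β' k = β k + m * ((if k = i then (1:ℤ) else 0) - (if k = i + 1 then 1 else 0)) := by
    intro k
    simp [hβ'def, eps, Pi.add_apply, Pi.smul_apply, Pi.sub_apply, smul_eq_mul]
  have hsum : ∀ s : Finset ℕ, ∑ x ∈ s, β' x =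
      (∑ x ∈ s, β x) + m * ((if i ∈ s then (1:ℤ) else 0) - (if i + 1 ∈ s then 1 else 0)) := by
    intro s
    simp only [happ]
    rw [Finset.sum_add_distrib, ← Finset.mul_sum, Finset.sum_sub_distrib,
        Finset.sum_ite_eq' s i (fun _ => (1:ℤ)), Finset.sum_ite_eq' s (i + 1) (fun _ => (1:ℤ))]
  rw [eq_comm, ← sub_eq_zero, ← Finset.sum_sub_distrib]
  have hsub : ({i, i + 1} : Finset ℕ) ⊆ Finset.Icc 1 n := by
    intro x hx
    simp only [Finset.mem_insert, Finset.mem_singleton] at hx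
    simp only [Finset.mem_Icc]
    omega
  rw [← Finset.sum_subset hsub]
  · rw [Finset.sum_pair (by omega : i ≠ i + 1)]
    have hβ'i : β' i = β i + m := by rw [happ, if_pos rfl, if_neg (by omega)]; ring
    have hβ'i1 : β' (i + 1) = β (i + 1) - m := by
      rw [happ]
      rw [if_neg (by omega), if_pos rfl]
      ring
    have hthi' : thq q n β' i = q ^ ((∑ s ∈ Finset.Icc (i + 1) n, β s) - (∑ s ∈ Finset.Ico 1 i, β s) - m) := by
      unfold thq
      congr 1
      rw [hsum, hsum]
      rw [if_neg (by simp [Finset.mem_Icc]), if_pos (by simp [Finset.mem_Icc]; omega),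
          if_neg (by simp [Finset.mem_Ico]), if_neg (by simp [Finset.mem_Ico])]
      ring
    have hsplit_top : ∑ s ∈ Finset.Icc (i + 1) n, β s = β (i + 1) + ∑ s ∈ Finset.Icc (i + 2) n, β s := by
      rw [show Finset.Icc (i + 1) n = insert (i + 1) (Finset.Icc (i + 2) n) from by
        ext x; simp [Finset.mem_Icc]; omega]
      rw [Finset.sum_insert (by simp [Finset.mem_Icc])]
    have hsplit_bot : ∑ s ∈ Finset.Ico 1 (i + 1), β s = β i + ∑ s ∈ Finset.Ico 1 i, β s := by
      rw [show Finset.Ico 1 (i + 1) = insert i (Finset.Ico 1 i) from by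
        ext x; simp [Finset.mem_Ico]; omega]
      rw [Finset.sum_insert (by simp [Finset.mem_Ico])]
    have hthi1 : thq q n β (i + 1) = q ^ ((∑ s ∈ Finset.Icc (i + 1) n, β s) - (∑ s ∈ Finset.Ico 1 i, β s) - β i - β (i + 1)) := by
      unfold thq
      congr 1
      rw [hsplit_top, hsplit_bot]
      ring
    have hthi1' : thq q n β' (i + 1) = q ^ ((∑ s ∈ Finset.Icc (i + 1) n, β s) - (∑ s ∈ Finset.Ico 1 i, β s) - β i - β (i + 1) - m) := by
      unfold thq
      rw [hsum, hsum]
      rw [if_neg (by simp [Finset.mem_Icc]), if_neg (by simp [Finset.mem_Icc]),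
          if_pos (by simp [Finset.mem_Ico]; omega), if_neg (by simp [Finset.mem_Ico])]
      congr 1
      rw [hsplit_top, hsplit_bot]
      ring
    have hthi : thq q n β i = q ^ ((∑ s ∈ Finset.Icc (i + 1) n, β s) - (∑ s ∈ Finset.Ico 1 i, β s)) := rfl
    rw [hthi', hthi1', hthi, hthi1, hβ'i, hβ'i1]
    set E : ℤ := (∑ s ∈ Finset.Icc (i + 1) n, β s) - (∑ s ∈ Finset.Ico 1 i, β s)
    set a : ℤ := β i
    set b : ℤ := β (i + 1)
    clear_value E a b
    unfold qint
    have hqE : q ^ E ≠ 0 := zpow_ne_zero _ hq0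
    have hqa : q ^ a ≠ 0 := zpow_ne_zero _ hq0
    have hqb : q ^ b ≠ 0 := zpow_ne_zero _ hq0
    have hqm' : q ^ m ≠ 0 := zpow_ne_zero _ hq0
    rw [mul_div_assoc', mul_div_assoc', mul_div_assoc', mul_div_assoc',
        div_sub_div_same, div_sub_div_same, ← add_div, div_eq_zero_iff]
    left
    simp only [mul_sub, ← zpow_add₀ hq0]
    have e1 : E - m + (a + m) = E + a := by ring
    have e2 : E - m + -(a + m) = E + (-a - 2*m) := by ring
    have e3 : E - a - b - m + (b - m) = E + (-a - 2*m) := by ring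
    have e4 : E - a - b - m + -(b - m) = E + (-a - 2*b) := by ring
    have e5 : E + a = E + a := rfl
    have e6 : E + -a = E + (-a) := rfl
    have e7 : E - a - b + b = E + (-a) := by ring
    have e8 : E - a - b + -b = E + (-a - 2*b) := by ring
    rw [e1, e2, e3, e4, e7, e8]
    ring
  · intro k hk hk2
    simp only [Finset.mem_insert, Finset.mem_singleton, not_or] at hk2
    obtain ⟨hki, hki1⟩ := hk2
    simp only [Finset.mem_Icc] at hk
    have h1 : β' k = β k := by
      rw [happ, if_neg hki, if_neg hki1]
      ring
    have h2 : thq q n β' k = thq q n β k := by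
      unfold thq
      congr 1
      rw [hsum, hsum]
      by_cases hlt : k < i
      · rw [if_pos (by simp [Finset.mem_Icc]; omega), if_pos (by simp [Finset.mem_Icc]; omega),
            if_neg (by simp [Finset.mem_Ico]; omega), if_neg (by simp [Finset.mem_Ico]; omega)]
        ring
      · have hgt : i + 1 < k := by omega
        rw [if_neg (by simp [Finset.mem_Icc]; omega), if_neg (by simp [Finset.mem_Icc]; omega),
            if_pos (by simp [Finset.mem_Ico]; omega), if_pos (by simp [Finset.mem_Ico]; omega)]
        ring
    rw [h1, h2, sub_self]
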